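/- If A is generated as a K-algebra by the elements e(v) (v ∈ Q₀) together with x(α) (α ∈ Q₁), then A is finite-dimensional over K; more precisely, A is spanned as a K-vector space by the finite set consisting of the idempotents e(v) for v ∈ Q₀ together with the products x(α)·x(g(α))·x(g²(α))⋯x(g^r(α)) for α ∈ Q₁ and 0 ≤ r ≤ n_α − 1. -/

import Mathlib

/-- The product `x α * x (g α) * ⋯ * x (g^[m-1] α)` of `m` factors along the `g`-orbit,
read left to right (the empty product for `m = 0` is `1`). -/
def gpath {Q₁ A : Type} [Ring A] (x : Q₁ → A) (g : Q₁ → Q₁) (α : Q₁) (m : ℕ) : A :=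
  ((List.range m).map fun i => x (g^[i] α)).prod

lemma gpath_zero {Q₁ A : Type} [Ring A] (x : Q₁ → A) (g : Q₁ → Q₁) (α : Q₁) :
    gpath x g α 0 = 1 := by simp [gpath]

lemma gpath_one {Q₁ A : Type} [Ring A] (x : Q₁ → A) (g : Q₁ → Q₁) (α : Q₁) :
    gpath x g α 1 = x α := by simp [gpath, List.range_succ]

lemma gpath_succ {Q₁ A : Type} [Ring A] (x : Q₁ → A) (g : Q₁ → Q₁) (α : Q₁) (m : ℕ) :
    gpath x g α (m + 1) = gpath x g α m * x (g^[m] α) := by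
  simp [gpath, List.range_succ]

lemma gpath_add {Q₁ A : Type} [Ring A] (x : Q₁ → A) (g : Q₁ → Q₁) (α : Q₁) (a b : ℕ) :
    gpath x g α (a + b) = gpath x g α a * gpath x g (g^[a] α) b := by
  induction b with
  | zero => simp [gpath_zero]
  | succ b ih =>
      rw [← Nat.add_assoc, gpath_succ, ih, gpath_succ, mul_assoc]
      rw [← Function.iterate_add_apply, Nat.add_comm b a]

lemma gpath_cons {Q₁ A : Type} [Ring A] (x : Q₁ → A) (g : Q₁ → Q₁) (α : Q₁) (m : ℕ) :
    gpath x g α (m + 1) = x α * gpath x g (g α) m := by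
  rw [Nat.add_comm, gpath_add, gpath_one, Function.iterate_one]

open Pointwise

theorem stmt_18
  {Q₀ Q₁ : Type} [Fintype Q₀] [Fintype Q₁] [DecidableEq Q₀] [DecidableEq Q₁]
  [Nonempty Q₀] [Nonempty Q₁]
  (s t : Q₁ → Q₀)
  (hconn : ∀ u v : Q₀, Relation.EqvGen (fun a b => ∃ e : Q₁, s e = a ∧ t e = b) u v)
  (hnoloop : ∀ e : Q₁, s e ≠ t e)
  (hno2cyc : ∀ e e' : Q₁, ¬ (s e = t e' ∧ t e = s e'))
  (hout : ∀ v : Q₀, (Finset.univ.filter fun e => s e = v).card = 2)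
  (hin : ∀ v : Q₀, (Finset.univ.filter fun e => t e = v).card = 2)
  (f g : Q₁ ≃ Q₁)
  (hfg : ∀ α : Q₁, f α ≠ g α)
  (hsf : ∀ α : Q₁, s (f α) = t α)
  (hsg : ∀ α : Q₁, s (g α) = t α)
  (hf3 : ∀ α : Q₁, f (f (f α)) = α)
  (bar : Q₁ → Q₁)
  (hbar_ne : ∀ α : Q₁, bar α ≠ α)
  (hbar_s : ∀ α : Q₁, s (bar α) = s α)
  {K : Type} [Field K] {A : Type} [Ring A] [Algebra K A]
  (c : Q₁ → K) (hc0 : ∀ α : Q₁, c α ≠ 0) (hcg : ∀ α : Q₁, c (g α) = c α)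
  (x : Q₁ → A)
  (hrel : ∀ α : Q₁, x (f α) * x (f (f α)) =
      c α • gpath x (⇑g) (g α) (Function.minimalPeriod (⇑g) α - 1))
  (e : Q₀ → A)
  (hidem : ∀ v : Q₀, e v * e v = e v)
  (horth : ∀ v w : Q₀, v ≠ w → e v * e w = 0)
  (hsum : ∑ v : Q₀, e v = 1)
  (hes : ∀ α : Q₁, e (s α) * x α = x α)
  (het : ∀ α : Q₁, x α * e (t α) = x α)
  (hvan : ∀ β : Q₁, x β * x (g β) * x (f (g β)) = 0 ∧ x β * x (f β) * x (g (f β)) = 0)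
  (hgen : Algebra.adjoin K (Set.range e ∪ Set.range x) = ⊤) :
    FiniteDimensional K A ∧
      Submodule.span K (Set.range e ∪
        {a : A | ∃ (α : Q₁) (r : ℕ), r ≤ Function.minimalPeriod (⇑g) α - 1 ∧
          a = gpath x (⇑g) α (r + 1)}) = ⊤ := by
  classical
  set n : Q₁ → ℕ := fun α => Function.minimalPeriod (⇑g) α with hn
  -- every point is periodic for g
  have hmemp : ∀ α : Q₁, α ∈ Function.periodicPts (⇑g) := by
    intro α
    refine Function.mk_mem_periodicPts (n := orderOf g) (orderOf_pos g) ?_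
    show g^[orderOf g] α = α
    rw [← Equiv.Perm.coe_pow, pow_orderOf_eq_one]
    rfl
  have hnpos : ∀ α, 0 < n α := fun α =>
    Function.minimalPeriod_pos_of_mem_periodicPts (hmemp α)
  have hiter : ∀ α, g^[n α] α = α := fun α => Function.iterate_minimalPeriod
  have hn2 : ∀ α, 2 ≤ n α := by
    intro α
    by_contra h
    have h1 : n α = 1 := by have := hnpos α; omega
    have hg1 : g α = α := by
      have := hiter α
      rwa [h1, Function.iterate_one] at this
    have := hsg α
    rw [hg1] at this
    exact hnoloop α this
  have hnit : ∀ (α : Q₁) (k : ℕ), n (g^[k] α) = n α := fun α k =>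
    Function.minimalPeriod_apply_iterate (hmemp α) k
  -- junction lemmas
  have hxe : ∀ (α : Q₁) (v : Q₀), v ≠ t α → x α * e v = 0 := by
    intro α v h
    rw [← het α, mul_assoc, horth _ _ (fun hh => h hh.symm), mul_zero]
  have hex : ∀ (v : Q₀) (α : Q₁), v ≠ s α → e v * x α = 0 := by
    intro v α h
    calc e v * x α = e v * (e (s α) * x α) := by rw [hes]
      _ = (e v * e (s α)) * x α := by rw [mul_assoc]
      _ = 0 := by rw [horth _ _ h, zero_mul]
  have hxx : ∀ α β : Q₁, s β ≠ t α → x α * x β = 0 := by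
    intro α β h
    calc x α * x β = x α * (e (s β) * x β) := by rw [hes]
      _ = (x α * e (s β)) * x β := by rw [mul_assoc]
      _ = 0 := by rw [hxe _ _ (fun hh => h hh), zero_mul]
  have hout2 : ∀ α β : Q₁, s β = t α → β = f α ∨ β = g α := by
    intro α β h
    have hsub : ({f α, g α} : Finset Q₁) ⊆ Finset.univ.filter (fun e => s e = t α) := by
      intro γ hγ
      simp only [Finset.mem_insert, Finset.mem_singleton] at hγ
      rcases hγ with rfl | rfl <;> simp [hsf, hsg]
    have hcard : (Finset.univ.filter (fun e => s e = t α)).card ≤ ({f α, g α} : Finset Q₁).card := by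
      rw [hout (t α), Finset.card_pair (hfg α)]
    have heq := Finset.eq_of_subset_of_card_le hsub hcard
    have hβ : β ∈ ({f α, g α} : Finset Q₁) := by
      rw [heq]; simp [h]
    simpa using hβ
  -- the cycle relation rewritten
  have hcycle : ∀ α : Q₁, x α * x (f α)
      = c (f (f α)) • gpath x (⇑g) (g (f (f α))) (n (f (f α)) - 1) := by
    intro α
    have h := hrel (f (f α))
    rw [hf3 α] at h
    exact h
  -- the full cycle plus one vanishes
  have hfull : ∀ α : Q₁, gpath x (⇑g) α (n α + 1) = 0 := by
    intro α
    have h1 : n α - 1 + 1 = n α := by have := hnpos α; omega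
    have hgβ : g ((⇑g)^[n α - 1] α) = α := by
      have h2 := Function.iterate_succ_apply' (⇑g) (n α - 1) α
      rw [Nat.succ_eq_add_one, h1] at h2
      rw [← h2]
      exact hiter α
    have hnβ : Function.minimalPeriod (⇑g) ((⇑g)^[n α - 1] α) = n α := hnit α _
    have h3 := hrel ((⇑g)^[n α - 1] α)
    rw [hgβ, hnβ] at h3
    have hsplit : gpath x (⇑g) α (n α + 1)
        = gpath x (⇑g) α (n α - 1) * (x ((⇑g)^[n α - 1] α) * x (g ((⇑g)^[n α - 1] α))) := by
      have h2 : n α + 1 = (n α - 1) + 1 + 1 := by have := hnpos α; omega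
      rw [h2, gpath_succ, gpath_succ, mul_assoc, Function.iterate_succ_apply']
    have hz : x (f (f ((⇑g)^[n α - 1] α)))
        * (x ((⇑g)^[n α - 1] α) * x (g ((⇑g)^[n α - 1] α))) = 0 := by
      have h4 := (hvan (f (f ((⇑g)^[n α - 1] α)))).2
      rw [hf3] at h4
      rw [← mul_assoc]
      exact h4
    have h5 : c ((⇑g)^[n α - 1] α) • gpath x (⇑g) α (n α + 1) = 0 := by
      rw [hsplit, ← smul_mul_assoc, ← h3, mul_assoc, hz, mul_zero]
    rcases smul_eq_zero.mp h5 with h6 | h6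
    · exact absurd h6 (hc0 _)
    · exact h6
  have hbig : ∀ (α : Q₁) (m : ℕ), n α + 1 ≤ m → gpath x (⇑g) α m = 0 := by
    intro α m hm
    obtain ⟨k, rfl⟩ := Nat.exists_eq_add_of_le hm
    rw [gpath_add, hfull, zero_mul]
  -- the spanning set and submodule
  set T : Set A := {a : A | ∃ (α : Q₁) (r : ℕ), r ≤ Function.minimalPeriod (⇑g) α - 1 ∧
          a = gpath x (⇑g) α (r + 1)} with hT
  set G : Set A := Set.range e ∪ T with hG
  set S : Submodule K A := Submodule.span K G with hS
  have hmem_e : ∀ v, e v ∈ S := fun v => Submodule.subset_span (Or.inl ⟨v, rfl⟩)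
  have hmem_g : ∀ (α : Q₁) (r : ℕ), r ≤ n α - 1 → gpath x (⇑g) α (r + 1) ∈ S :=
    fun α r h => Submodule.subset_span (Or.inr ⟨α, r, h, rfl⟩)
  have hone : (1 : A) ∈ S := by
    rw [← hsum]
    exact Submodule.sum_mem _ (fun v _ => hmem_e v)
  have hmem_any : ∀ (α : Q₁) (a : ℕ), gpath x (⇑g) α a ∈ S := by
    intro α a
    rcases Nat.eq_zero_or_pos a with rfl | ha
    · rw [gpath_zero]; exact hone
    rcases le_or_gt a (n α) with hle | hlt
    · have h1 : a = (a - 1) + 1 := by omega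
      rw [h1]
      exact hmem_g α (a - 1) (by have := hn2 α; omega)
    · rw [hbig α a (by omega)]
      exact zero_mem S
  -- key closure lemma
  have hkey : ∀ (m : ℕ) (α : Q₁) (a : ℕ) (β : Q₁),
      gpath x (⇑g) α (a + 1) * gpath x (⇑g) β m ∈ S := by
    intro m
    induction m with
    | zero =>
        intro α a β
        rw [gpath_zero, mul_one]
        exact hmem_any α (a + 1)
    | succ m ih =>
        intro α a β
        rw [gpath_cons x (⇑g) β m]
        by_cases hsb : s β = t (g^[a] α)
        · rcases hout2 (g^[a] α) β hsb with hβf | hβg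
          · rcases Nat.eq_zero_or_pos a with rfl | ha
            · -- a = 0 : use the cycle relation
              simp only [Function.iterate_zero, id_eq] at hβf
              subst hβf
              rw [zero_add, gpath_one, ← mul_assoc, hcycle α, smul_mul_assoc]
              refine Submodule.smul_mem _ _ ?_
              have h2 : n (f (f α)) - 1 = (n (f (f α)) - 2) + 1 := by
                have := hn2 (f (f α)); omega
              rw [h2]
              exact ih _ _ _
            · -- a ≥ 1 : vanishing relation kills the product
              obtain ⟨b, rfl⟩ : ∃ b, a = b + 1 := ⟨a - 1, by omega⟩
              have hδ : g^[b + 1] α = g (g^[b] α) := Function.iterate_succ_apply' _ _ _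
              rw [hδ] at hβf
              have hzero : gpath x (⇑g) α (b + 1 + 1) * x β = 0 := by
                rw [hβf, gpath_succ, gpath_succ, hδ, mul_assoc, mul_assoc,
                  ← mul_assoc (x ((⇑g)^[b] α)), (hvan ((⇑g)^[b] α)).1, mul_zero]
              rw [← mul_assoc, hzero, zero_mul]
              exact zero_mem S
          · -- β continues the g-path
            rw [← mul_assoc]
            have h6 : gpath x (⇑g) α (a + 1) * x β = gpath x (⇑g) α (a + 1 + 1) := by
              rw [gpath_succ x (⇑g) α (a + 1), Function.iterate_succ_apply', ← hβg]
            rw [h6]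
            exact ih α (a + 1) (g β)
        · -- sources don't match : product is zero
          have hz0 : x ((⇑g)^[a] α) * x β = 0 := hxx _ _ hsb
          rw [gpath_succ, mul_assoc, ← mul_assoc (x ((⇑g)^[a] α)), hz0, zero_mul, mul_zero]
          exact zero_mem S
  -- S is closed under multiplication
  have hGG : G * G ⊆ (S : Set A) := by
    rintro z hz
    rw [Set.mem_mul] at hz
    obtain ⟨p, hp, q, hq, rfl⟩ := hz
    rcases hp with ⟨v, rfl⟩ | ⟨α, r, hr, rfl⟩ <;> rcases hq with ⟨w, rfl⟩ | ⟨β, r', hr', rfl⟩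
    · by_cases hvw : v = w
      · subst hvw; rw [hidem]; exact hmem_e v
      · rw [horth _ _ hvw]; exact zero_mem S
    · rw [gpath_cons, ← mul_assoc]
      by_cases hv : v = s β
      · subst hv; rw [hes]; rw [← gpath_cons]; exact hmem_g β r' hr'
      · rw [hex _ _ hv, zero_mul]; exact zero_mem S
    · rw [gpath_succ, mul_assoc]
      by_cases hv : w = t ((⇑g)^[r] α)
      · subst hv; rw [het]; rw [← gpath_succ]; exact hmem_g α r hr
      · rw [hxe _ _ hv, mul_zero]
        exact zero_mem S
    · exact hkey (r' + 1) α r β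
  have hmulS : ∀ p q : A, p ∈ S → q ∈ S → p * q ∈ S := by
    intro p q hp hq
    have h : S * S ≤ S := by
      rw [hS, Submodule.span_mul_span]
      exact Submodule.span_le.mpr hGG
    exact h (Submodule.mul_mem_mul hp hq)
  -- S is a subalgebra containing the generators, hence everything
  have hSpan : S = ⊤ := by
    set Salg : Subalgebra K A := S.toSubalgebra hone hmulS with hSalg
    have hle : Algebra.adjoin K (Set.range e ∪ Set.range x) ≤ Salg := by
      refine Algebra.adjoin_le ?_
      rintro a (⟨v, rfl⟩ | ⟨α, rfl⟩)
      · exact hmem_e v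
      · show x α ∈ S
        have := hmem_g α 0 (Nat.zero_le _)
        rwa [gpath_one] at this
    rw [hgen] at hle
    rw [eq_top_iff]
    intro a _
    exact hle (by trivial : a ∈ (⊤ : Subalgebra K A))
  -- finiteness of the spanning set
  have hGfin : G.Finite := by
    refine (Set.finite_range e).union ?_
    have hTsub : T ⊆ (fun p : Q₁ × ℕ => gpath x (⇑g) p.1 (p.2 + 1)) ''
        ((Set.univ : Set Q₁) ×ˢ Set.Iic (Finset.univ.sup fun α => n α - 1)) := by
      rintro a ⟨α, r, hr, rfl⟩
      exact ⟨(α, r), ⟨Set.mem_univ _, (show r ≤ (Finset.univ.sup fun α => n α - 1) from (Finset.le_sup (f := fun α => n α - 1) (Finset.mem_univ α)).trans' hr)⟩, rfl⟩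
    exact ((Set.finite_univ.prod (Set.finite_Iic _)).image _).subset hTsub
  refine ⟨⟨Submodule.fg_def.mpr ⟨G, hGfin, hSpan⟩⟩, hSpan⟩
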